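/- Let A be a finite abelian group with finite generating set Σ. Then the width of the Cayley graph of A with respect to Σ satisfies w(X(A; Σ)) ≤ 6|Σ||A| / ⌊(|A| − 1)^{1/|Σ|}⌋, provided ⌊(|A| − 1)^{1/|Σ|}⌋ ≥ 1. -/

import Mathlib

/-- A (multi)graph: a type of vertices, a type of edges, and an endpoint map
(an edge with endpoints `(a, b)` joins `a` to `b`; edges are counted with
multiplicity). -/
structure MultiGraph where
  V : Type*
  E : Type*
  ends : E → V × V

/-- `|∂A|`: the number of edges with exactly one endpoint in `A`. -/
noncomputable def MultiGraph.bdry (X : MultiGraph) (A : Set X.V) : ℕ :=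
  Nat.card {e : X.E // Xor' ((X.ends e).1 ∈ A) ((X.ends e).2 ∈ A)}

/-- The width `w(X)` of a finite graph `X`: the minimum, over all linear orderings of
the vertices (bijections `Fin |V(X)| ≃ V(X)`), of the maximal value of `|∂D_n|`, where
`D_n` is the set of the first `n` vertices. -/
noncomputable def MultiGraph.width (X : MultiGraph) : ℕ :=
  sInf {w | ∃ e : Fin (Nat.card X.V) ≃ X.V,
    ∀ n : ℕ, X.bdry (⇑e '' {m | (m : ℕ) < n}) ≤ w}


/-- The Cayley graph `X(A; Σ)` of a group `A` with respect to a finite generating set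
`Σ`: the vertex set is `A`, and for each vertex `a` and each `s ∈ Σ` there is one edge
joining `a` to `a·s` (edges counted with multiplicity, one for each pair `(a, s)`). -/
noncomputable def cayleyGraph (A : Type*) [Group A] (Sg : Finset A) : MultiGraph :=
  { V := A
    E := A × {s // s ∈ Sg}
    ends := fun p => (p.1, p.1 * (p.2 : A)) }

open Finset

section psi
variable {m N : ℕ}

noncomputable def psiHom (m N : ℕ) (h : m ∣ N) : ZMod m →+ ZMod N :=
  ZMod.lift m ⟨zmultiplesHom (ZMod N) ((N / m : ℕ) : ZMod N), by
    show (m : ℤ) • ((N / m : ℕ) : ZMod N) = 0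
    rw [natCast_zsmul, nsmul_eq_mul, ← Nat.cast_mul, Nat.mul_div_cancel' h, ZMod.natCast_self]⟩

lemma psiHom_apply [NeZero m] (h : m ∣ N) (c : ZMod m) :
    psiHom m N h c = ((c.val * (N / m) : ℕ) : ZMod N) := by
  have h2 : psiHom m N h ((c.val : ℤ) : ZMod m) = ((c.val * (N / m) : ℕ) : ZMod N) := by
    rw [psiHom, ZMod.lift_coe]
    show (c.val : ℤ) • ((N / m : ℕ) : ZMod N) = _
    rw [natCast_zsmul, nsmul_eq_mul, ← Nat.cast_mul]
  have hc : ((c.val : ℤ) : ZMod m) = c := by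
    push_cast
    exact ZMod.natCast_rightInverse c
  rwa [hc] at h2

lemma psiHom_injective (h : m ∣ N) (hN : 0 < N) [NeZero m] :
    Function.Injective (psiHom m N h) := by
  intro c c' hcc
  have hq : 0 < N / m := Nat.div_pos (Nat.le_of_dvd hN h) (NeZero.pos m)
  have hmN : m * (N / m) = N := Nat.mul_div_cancel' h
  have h1 : c.val * (N / m) < N := by
    calc c.val * (N / m) < m * (N / m) := by
          exact (Nat.mul_lt_mul_right hq).mpr (ZMod.val_lt c)
      _ = N := hmN
  have h2 : c'.val * (N / m) < N := by
    calc c'.val * (N / m) < m * (N / m) := by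
          exact (Nat.mul_lt_mul_right hq).mpr (ZMod.val_lt c')
      _ = N := hmN
  haveI : NeZero N := ⟨hN.ne'⟩
  rw [psiHom_apply, psiHom_apply] at hcc
  have := congrArg ZMod.val hcc
  rw [ZMod.val_cast_of_lt h1, ZMod.val_cast_of_lt h2] at this
  exact ZMod.val_injective m (Nat.eq_of_mul_eq_mul_right hq this)

end psi

/-- A finite abelian group has at least `|A|` characters valued in `ZMod |A|`. -/
lemma card_le_card_monoidHom (A : Type*) [CommGroup A] [Finite A] :
    Nat.card A ≤ Nat.card (A →* Multiplicative (ZMod (Nat.card A))) := by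
  classical
  set N := Nat.card A with hNdef
  haveI : NeZero N := ⟨Nat.card_pos.ne'⟩
  obtain ⟨ι, hι, n, hn, ⟨e⟩⟩ := CommGroup.equiv_prod_multiplicative_zmod_of_finite A
  haveI : ∀ i, NeZero (n i) := fun i => ⟨by have := hn i; omega⟩
  have hprod : ∏ i, n i = N := by
    have h1 := Nat.card_congr e.toEquiv
    rw [Nat.card_pi] at h1
    simp only [Nat.card_eq_fintype_card, Fintype.card_multiplicative, ZMod.card] at h1
    rw [← h1]
  have hdvd : ∀ i, n i ∣ N := fun i => hprod ▸ Finset.dvd_prod_of_mem _ (Finset.mem_univ i)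
  haveI : Finite (A →* Multiplicative (ZMod N)) :=
    Finite.of_injective (fun φ => (φ : A → Multiplicative (ZMod N))) DFunLike.coe_injective
  set J : (∀ i, ZMod (n i)) → (A →* Multiplicative (ZMod N)) := fun t =>
    { toFun := fun a => Multiplicative.ofAdd
        (∑ i, psiHom (n i) N (hdvd i) (t i * Multiplicative.toAdd (e a i)))
      map_one' := by simp
      map_mul' := by
        intro a b
        simp only [map_mul, Pi.mul_apply, toAdd_mul, mul_add, map_add,
          Finset.sum_add_distrib, ofAdd_add] } with hJ
  have hJinj : Function.Injective J := by
    intro t u htu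
    funext j
    have h1 := DFunLike.congr_fun htu (e.symm (Pi.mulSingle j (Multiplicative.ofAdd (1 : ZMod (n j)))))
    simp only [hJ, MonoidHom.coe_mk, OneHom.coe_mk, MulEquiv.apply_symm_apply] at h1
    have key : ∀ v : ∀ i, ZMod (n i),
        (∑ i, psiHom (n i) N (hdvd i)
          (v i * Multiplicative.toAdd ((Pi.mulSingle j (Multiplicative.ofAdd (1 : ZMod (n j))) : ∀ i, Multiplicative (ZMod (n i))) i)))
        = psiHom (n j) N (hdvd j) (v j) := by
      intro v
      rw [Finset.sum_eq_single j]
      · rw [Pi.mulSingle_eq_same, toAdd_ofAdd, mul_one]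
      · intro i _ hij
        rw [Pi.mulSingle_eq_of_ne hij, toAdd_one, mul_zero, map_zero]
      · intro h; exact absurd (Finset.mem_univ j) h
    rw [key t, key u] at h1
    exact psiHom_injective (hdvd j) Nat.card_pos (Multiplicative.ofAdd.injective h1)
  calc N = Nat.card (∀ i, ZMod (n i)) := by
        rw [Nat.card_pi]
        simp only [Nat.card_eq_fintype_card, ZMod.card]
        rw [hprod]
    _ ≤ _ := Nat.card_le_card_of_injective J hJinj


/-- Counting multiples of `g` with value in `[lo, lo+len]` among `ZMod N`. -/
lemma countM {N : ℕ} [NeZero N] (g lo len : ℕ) (hg : 0 < g) [DecidablePred fun u : ZMod N =>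
      g ∣ u.val ∧ lo ≤ u.val ∧ u.val ≤ lo + len] :
    (Finset.univ.filter fun u : ZMod N =>
      g ∣ u.val ∧ lo ≤ u.val ∧ u.val ≤ lo + len).card ≤ len / g + 1 := by
  calc (Finset.univ.filter fun u : ZMod N =>
          g ∣ u.val ∧ lo ≤ u.val ∧ u.val ≤ lo + len).card
      ≤ (Finset.range (len / g + 1)).card := ?_
    _ = len / g + 1 := Finset.card_range _
  apply Finset.card_le_card_of_injOn (fun u : ZMod N => (u.val - lo) / g)
  · intro u hu
    simp only [Finset.mem_coe, Finset.mem_filter] at hu ⊢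
    rw [Finset.mem_range, Nat.lt_succ_iff]
    exact Nat.div_le_div_right (by omega)
  · intro u hu u' hu' huv
    simp only [Finset.coe_filter, Set.mem_setOf_eq] at hu hu'
    have huv2 : (u.val - lo) / g = (u'.val - lo) / g := huv
    clear huv
    by_contra hne
    have hval : u.val ≠ u'.val := fun h => hne (ZMod.val_injective N h)
    rcases Nat.lt_or_ge u.val u'.val with h | h
    · have hgle : u.val + g ≤ u'.val := by
        have hd : g ∣ u'.val - u.val := Nat.dvd_sub hu'.2.1 hu.2.1
        have := Nat.le_of_dvd (by omega) hd
        omega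
      have : (u.val - lo) / g + 1 ≤ (u'.val - lo) / g := by
        calc (u.val - lo) / g + 1 = (u.val - lo + g) / g := by
              rw [Nat.add_div_right _ hg]
          _ ≤ (u'.val - lo) / g := Nat.div_le_div_right (by omega)
      omega
    · have hlt : u'.val < u.val := by omega
      have hgle : u'.val + g ≤ u.val := by
        have hd : g ∣ u.val - u'.val := Nat.dvd_sub hu.2.1 hu'.2.1
        have := Nat.le_of_dvd (by omega) hd
        omega
      have : (u'.val - lo) / g + 1 ≤ (u.val - lo) / g := by
        calc (u'.val - lo) / g + 1 = (u'.val - lo + g) / g := by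
              rw [Nat.add_div_right _ hg]
          _ ≤ (u.val - lo) / g := Nat.div_le_div_right (by omega)
      omega

/-- If two values land in the same box, their difference is small. -/
lemma box_diff {N b v1 v2 : ℕ} (hN : 0 < N)
    (h : v1 * b / N = v2 * b / N) :
    (max v1 v2 - min v1 v2) * b < N := by
  have h3 := Nat.mod_add_div (v1 * b) N
  have h4 := Nat.mod_lt (v1 * b) hN
  have h5 := Nat.mod_add_div (v2 * b) N
  have h6 := Nat.mod_lt (v2 * b) hN
  rw [h] at h3
  rcases le_total v1 v2 with hle | hle
  · rw [max_eq_right hle, min_eq_left hle, Nat.sub_mul]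
    omega
  · rw [max_eq_left hle, min_eq_right hle, Nat.sub_mul]
    omega

/-- The circle-distance of a difference is bounded by the difference of values. -/
lemma val_sub_min {N : ℕ} [NeZero N] (u1 u2 : ZMod N) :
    min ((u1 - u2).val) (N - (u1 - u2).val) ≤ max u1.val u2.val - min u1.val u2.val := by
  rcases le_total u2.val u1.val with hle | hle
  · have hcast : ((u1.val - u2.val : ℕ) : ZMod N) = u1 - u2 := by
      rw [Nat.cast_sub hle, ZMod.natCast_rightInverse u1, ZMod.natCast_rightInverse u2]
    have hval : (u1 - u2).val = u1.val - u2.val := by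
      rw [← hcast, ZMod.val_cast_of_lt (by have := ZMod.val_lt u1; omega)]
    rw [max_eq_left hle, min_eq_right hle, hval]
    exact min_le_left _ _
  · have hcast : ((u2.val - u1.val : ℕ) : ZMod N) = u2 - u1 := by
      rw [Nat.cast_sub hle, ZMod.natCast_rightInverse u1, ZMod.natCast_rightInverse u2]
    have hval : (u2 - u1).val = u2.val - u1.val := by
      rw [← hcast, ZMod.val_cast_of_lt (by have := ZMod.val_lt u2; omega)]
    rcases eq_or_ne (u2 - u1) 0 with h0 | h0
    · have h12 : u2 = u1 := sub_eq_zero.mp h0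
      rw [h12, sub_self, ZMod.val_zero]
      simp
    · have hneg : (u1 - u2).val = N - (u2 - u1).val := by
        have hx : u1 - u2 = -(u2 - u1) := by ring
        rw [hx, ZMod.neg_val, if_neg h0]
      have h2 : (u2 - u1).val < N := ZMod.val_lt _
      rw [max_eq_right hle, min_eq_left hle, hneg, hval]
      have hrw : N - (N - (u2.val - u1.val)) = u2.val - u1.val := by
        rw [hval] at h2; omega
      rw [hrw]
      exact min_le_right _ _

/-- There is a nontrivial character all of whose values on `Sg` are close to `0`. -/
lemma exists_good_char (A : Type*) [CommGroup A] [Finite A] (Sg : Finset A)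
    (hSg : Subgroup.closure (Sg : Set A) = ⊤) (b : ℕ) (hb : 1 ≤ b)
    (hbd : b ^ Sg.card < Nat.card A) :
    ∃ χ : A →* Multiplicative (ZMod (Nat.card A)), χ ≠ 1 ∧
      ∀ s ∈ Sg, (min (Multiplicative.toAdd (χ s)).val
        (Nat.card A - (Multiplicative.toAdd (χ s)).val)) * b < Nat.card A := by
  classical
  set N := Nat.card A with hNdef
  have hN0 : 0 < N := Nat.card_pos
  haveI : NeZero N := ⟨hN0.ne'⟩
  haveI : Finite (A →* Multiplicative (ZMod N)) :=
    Finite.of_injective (fun φ => (φ : A → Multiplicative (ZMod N))) DFunLike.coe_injective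
  haveI : Fintype (A →* Multiplicative (ZMod N)) := Fintype.ofFinite _
  set f : (A →* Multiplicative (ZMod N)) → ({s // s ∈ Sg} → Fin b) := fun φ s =>
    ⟨(Multiplicative.toAdd (φ (s : A))).val * b / N, by
      have hv := ZMod.val_lt (Multiplicative.toAdd (φ (s : A)))
      rw [Nat.div_lt_iff_lt_mul hN0]
      calc (Multiplicative.toAdd (φ (s : A))).val * b < N * b :=
            (Nat.mul_lt_mul_right hb).mpr hv
        _ = b * N := Nat.mul_comm _ _⟩ with hf
  have hcards : Fintype.card ({s // s ∈ Sg} → Fin b) < Fintype.card (A →* Multiplicative (ZMod N)) := by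
    rw [Fintype.card_fun, Fintype.card_fin, Fintype.card_coe]
    calc b ^ Sg.card < N := hbd
      _ ≤ Nat.card (A →* Multiplicative (ZMod N)) := card_le_card_monoidHom A
      _ = Fintype.card _ := Nat.card_eq_fintype_card
  obtain ⟨φ1, φ2, hne, heq⟩ := Fintype.exists_ne_map_eq_of_card_lt f hcards
  refine ⟨φ1 / φ2, fun h => hne (div_eq_one.mp h), ?_⟩
  intro s hs
  have hval := congrArg (fun F => (F ⟨s, hs⟩ : Fin b).val) heq
  simp only [hf] at hval
  have hbox := box_diff (b := b) hN0 hval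
  have hmin := val_sub_min (Multiplicative.toAdd (φ1 s)) (Multiplicative.toAdd (φ2 s))
  have hdivapp : Multiplicative.toAdd ((φ1 / φ2) s)
      = Multiplicative.toAdd (φ1 s) - Multiplicative.toAdd (φ2 s) := by
    simp [MonoidHom.div_apply]
  rw [hdivapp]
  calc (min ((Multiplicative.toAdd (φ1 s) - Multiplicative.toAdd (φ2 s)).val)
        (N - (Multiplicative.toAdd (φ1 s) - Multiplicative.toAdd (φ2 s)).val)) * b
      ≤ (max (Multiplicative.toAdd (φ1 s)).val (Multiplicative.toAdd (φ2 s)).val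
        - min (Multiplicative.toAdd (φ1 s)).val (Multiplicative.toAdd (φ2 s)).val) * b :=
        Nat.mul_le_mul_right b hmin
    _ < N := hbox


/-- **Lemma 3.4.** Let `A` be a finite abelian group with finite generating set `Σ`.
Then `w(X(A; Σ)) ≤ 6|Σ||A| / ⌊(|A| - 1)^{1/|Σ|}⌋`, provided the floor is at least 1. -/
theorem stmt8 (A : Type*) [CommGroup A] [Finite A]
    (Sg : Finset A) (hSg : Subgroup.closure (Sg : Set A) = ⊤)
    (hfl : 1 ≤ ⌊((Nat.card A : ℝ) - 1) ^ ((1 : ℝ) / (Sg.card : ℝ))⌋₊) :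
    ((cayleyGraph A Sg).width : ℝ) ≤
      6 * (Sg.card : ℝ) * (Nat.card A : ℝ) /
        (⌊((Nat.card A : ℝ) - 1) ^ ((1 : ℝ) / (Sg.card : ℝ))⌋₊ : ℝ) := by
  classical
  set N := Nat.card A with hNdef
  set d := Sg.card with hddef
  set b := ⌊((N : ℝ) - 1) ^ ((1 : ℝ) / (d : ℝ))⌋₊ with hbdef
  have hN0 : 0 < N := Nat.card_pos
  have hb1 : 1 ≤ b := hfl
  have hb0R : (0:ℝ) < (b : ℝ) := by exact_mod_cast hb1
  by_cases hd0 : d = 0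
  · -- `Sg` is empty; the graph has no edges.
    have hSe : Sg = ∅ := Finset.card_eq_zero.mp hd0
    haveI : IsEmpty {s // s ∈ Sg} :=
      ⟨fun s => (Finset.notMem_empty (s : A) (hSe ▸ s.2))⟩
    have hwidth : (cayleyGraph A Sg).width = 0 := by
      apply Nat.le_zero.mp
      apply Nat.sInf_le
      refine ⟨(Finite.equivFin A).symm, fun n => ?_⟩
      haveI : IsEmpty ((cayleyGraph A Sg).E) :=
        (inferInstance : IsEmpty (A × {s // s ∈ Sg}))
      have h0 : (cayleyGraph A Sg).bdry
          ((⇑(Finite.equivFin A).symm) '' {m | (m : ℕ) < n}) = 0 := by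
        apply Nat.card_of_isEmpty
      exact h0.le
    rw [hwidth]
    push_cast
    apply div_nonneg _ (le_of_lt hb0R)
    positivity
  · -- main case
    have hd1 : 1 ≤ d := Nat.one_le_iff_ne_zero.mpr hd0
    have hdR : (0:ℝ) < (d:ℝ) := by exact_mod_cast hd1
    have hN2 : 2 ≤ N := by
      by_contra hlt
      have hN1 : N = 1 := by omega
      have hz : ((N : ℝ) - 1) = 0 := by rw [hN1]; norm_num
      rw [hz, Real.zero_rpow (by positivity : (1 : ℝ) / (d : ℝ) ≠ 0), Nat.floor_zero] at hbdef
      omega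
    have hNR : (0:ℝ) ≤ (N:ℝ) - 1 := by
      have : (1:ℝ) ≤ (N:ℝ) := by exact_mod_cast hN0
      linarith
    have hbdN : b ^ d ≤ N - 1 := by
      have hble : (b : ℝ) ≤ ((N : ℝ) - 1) ^ ((1 : ℝ) / (d : ℝ)) :=
        Nat.floor_le (by positivity)
      have hpow : ((b:ℝ)) ^ (d:ℕ) ≤ (((N : ℝ) - 1) ^ ((1 : ℝ) / (d : ℝ))) ^ (d:ℕ) := by
        apply pow_le_pow_left₀ (by positivity) hble
      rw [← Real.rpow_natCast (((N : ℝ) - 1) ^ ((1 : ℝ) / (d : ℝ))) d,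
        ← Real.rpow_mul hNR, one_div, inv_mul_cancel₀ (by positivity : (d:ℝ) ≠ 0),
        Real.rpow_one] at hpow
      have hcast : ((b ^ d : ℕ) : ℝ) ≤ ((N - 1 : ℕ) : ℝ) := by
        rw [Nat.cast_sub (by omega : 1 ≤ N)]
        push_cast
        exact hpow
      exact_mod_cast hcast
    -- get the character
    haveI : NeZero N := ⟨hN0.ne'⟩
    obtain ⟨χ, hχ1, hbox⟩ := exists_good_char A Sg hSg b hb1 (by rw [← hddef, ← hNdef]; omega)
    -- fiber data
    set u : A → ZMod N := fun a => Multiplicative.toAdd (χ a) with hudef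
    set fv : A → ℕ := fun a => (u a).val with hfvdef
    set K := χ.ker with hKdef
    set g := Nat.card K with hgdef
    set k := Nat.card χ.range with hkdef
    have hg0 : 0 < g := Nat.card_pos
    have hk0 : 0 < k := Nat.card_pos
    have hkg : k * g = N := by
      rw [hkdef, hgdef, hKdef, ← Nat.card_congr (QuotientGroup.quotientKerEquivRange χ).toEquiv]
      exact (Subgroup.card_eq_card_quotient_mul_card_subgroup χ.ker).symm
    have hgN : g ∣ N := ⟨k, by rw [← hkg]; ring⟩
    have hdvd : ∀ a : A, g ∣ fv a := by
      intro a
      have hx : (χ a) ^ k = 1 := by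
        have hy : (⟨χ a, ⟨a, rfl⟩⟩ : χ.range) ^ k = 1 := pow_card_eq_one'
        have := congrArg (Subtype.val) hy
        simpa using this
      have hsm : (k : ZMod N) * (u a) = 0 := by
        have h2 := congrArg Multiplicative.toAdd hx
        rw [toAdd_pow] at h2
        simpa [nsmul_eq_mul] using h2
      have h3 : ((k * fv a : ℕ) : ZMod N) = 0 := by
        push_cast
        rw [hfvdef]
        simp only []
        rw [ZMod.natCast_val, ZMod.cast_id]
        exact hsm
      have h4 : N ∣ k * fv a := (ZMod.natCast_eq_zero_iff _ N).mp h3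
      rcases h4 with ⟨c, hc⟩
      refine ⟨c, ?_⟩
      have : k * fv a = k * (g * c) := by rw [hc, ← hkg]; ring
      exact Nat.eq_of_mul_eq_mul_left hk0 this
    have hgb : g * b < N := by
      obtain ⟨s0, hs0, hχs0⟩ : ∃ s ∈ Sg, χ s ≠ 1 := by
        by_contra hall
        push_neg at hall
        apply hχ1
        have hker : (Sg : Set A) ⊆ (K : Set A) := fun s hs =>
          MonoidHom.mem_ker.mpr (hall s hs)
        have htop : (⊤ : Subgroup A) ≤ K := by
          rw [← hSg]
          exact (Subgroup.closure_le K).mpr hker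
        ext a
        exact MonoidHom.mem_ker.mp (htop (Subgroup.mem_top a))
      have hu0 : u s0 ≠ 0 := by
        rw [hudef]
        simpa using hχs0
      have hv0 : fv s0 ≠ 0 := by
        rw [hfvdef]
        simpa [ZMod.val_eq_zero] using hu0
      have hvlt : fv s0 < N := ZMod.val_lt (u s0)
      have h1 : g ≤ fv s0 := Nat.le_of_dvd (by omega) (hdvd s0)
      have h2 : g ≤ N - fv s0 := by
        apply Nat.le_of_dvd (by omega)
        exact Nat.dvd_sub hgN (hdvd s0)
      calc g * b ≤ min (fv s0) (N - fv s0) * b :=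
            Nat.mul_le_mul_right b (le_min h1 h2)
        _ < N := hbox s0 hs0
    -- the sorted ordering
    set e0 : Fin N ≃ A := (Finite.equivFin A).symm with he0def
    set f : Fin N → ℕ := fun i => fv (e0 i) with hfdef2
    set σ : Equiv.Perm (Fin N) := Tuple.sort f with hσdef
    set EQ : Fin N ≃ A := σ.trans e0 with hEQdef
    have hmono : Monotone (f ∘ σ) := Tuple.monotone_sort f
    set es : A → ℕ := fun s => min (fv s) (N - fv s) with hesdef
    set W : ℕ := ∑ s ∈ Sg, (2 * es s + 2 * g) with hWdef
    haveI : Fintype A := Fintype.ofFinite A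
    -- the per-cut bound
    have hwle : (cayleyGraph A Sg).width ≤ W := by
      apply Nat.sInf_le
      refine ⟨EQ, ?_⟩
      intro nn
      suffices hsuf : (cayleyGraph A Sg).bdry ((⇑EQ '' {m | (m : ℕ) < nn} : Set A)) ≤ W by
        exact hsuf
      set D : Set A := (⇑EQ '' {m | (m : ℕ) < nn}) with hDdef
      by_cases hnn : nn < N
      · -- main cut bound
        set v : ℕ := f (σ ⟨nn, hnn⟩) with hvdef
        have hvD : ∀ a ∈ D, fv a ≤ v := by
          rintro a ⟨m, hm, rfl⟩
          have hmle : m ≤ (⟨nn, hnn⟩ : Fin N) := Fin.le_def.mpr (le_of_lt hm)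
          exact hmono hmle
        have hvDc : ∀ a : A, a ∉ D → v ≤ fv a := by
          intro a ha
          have hj : ¬ ((EQ.symm a : ℕ) < nn) := by
            intro hlt
            exact ha ⟨EQ.symm a, hlt, EQ.apply_symm_apply a⟩
          have hle : (⟨nn, hnn⟩ : Fin N) ≤ EQ.symm a := Fin.le_def.mpr (Nat.not_lt.mp hj)
          have h2 := hmono hle
          calc v ≤ (f ∘ σ) (EQ.symm a) := h2
            _ = fv (EQ (EQ.symm a)) := rfl
            _ = fv a := by rw [EQ.apply_symm_apply]
        -- express bdry as a Finset card
        have hcard : (cayleyGraph A Sg).bdry D =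
            ((Finset.univ : Finset (A × {s // s ∈ Sg})).filter
              (fun p => Xor' ((p.1 : A) ∈ D) (p.1 * (p.2 : A) ∈ D))).card := by
          show Nat.card {p : A × {s // s ∈ Sg} //
            Xor' ((p.1 : A) ∈ D) (p.1 * (p.2 : A) ∈ D)} = _
          rw [Nat.card_eq_fintype_card, Fintype.card_subtype]
        rw [hcard]
        rw [Finset.card_eq_sum_card_fiberwise
          (f := fun p : A × {s // s ∈ Sg} => p.2)
          (t := (Finset.univ : Finset {s // s ∈ Sg}))
          (fun x _ => Finset.mem_univ _)]
        rw [hWdef, ← Finset.sum_coe_sort Sg (fun s => 2 * es s + 2 * g)]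
        apply Finset.sum_le_sum
        rintro s -
        -- per-generator bound
        set c : ZMod N := u (s : A) with hcdef
        set ec : ℕ := es (s : A) with hecdef
        have hecmin : ec = min c.val (N - c.val) := rfl
        have hclt : c.val < N := ZMod.val_lt c
        have heclt : ec * b < N := hbox (s : A) s.2
        -- step 1 : project to A
        have hstep1 : ((Finset.univ.filter
              (fun p : A × {s // s ∈ Sg} => Xor' ((p.1 : A) ∈ D) (p.1 * (p.2 : A) ∈ D))).filter
              (fun p => p.2 = s)).card
            ≤ (Finset.univ.filter (fun a : A => Xor' (a ∈ D) (a * (s : A) ∈ D))).card := by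
          apply Finset.card_le_card_of_injOn (fun p => p.1)
          · intro p hp
            simp only [Finset.mem_coe, Finset.mem_filter, Finset.mem_univ, true_and] at hp ⊢
            rcases hp with ⟨hx, h2⟩
            rw [h2] at hx
            exact hx
          · intro p hp q hq hpq
            simp only [Finset.coe_filter, Set.mem_setOf_eq] at hp hq
            exact Prod.ext hpq (hp.2.trans hq.2.symm)
        refine le_trans hstep1 ?_
        -- step 2 : crossing elements have χ-value in a small set
        set UP : ZMod N → Prop := fun w =>
          if c.val ≤ N - c.val then ((w.val ≤ v ∧ v ≤ w.val + ec) ∨ N ≤ w.val + ec)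
          else ((v ≤ w.val ∧ w.val ≤ v + ec) ∨ w.val < ec) with hUPdef
        have hstep2 : (Finset.univ.filter (fun a : A => Xor' (a ∈ D) (a * (s : A) ∈ D))).card
            ≤ (Finset.univ.filter (fun a : A => UP (u a))).card := by
          apply Finset.card_le_card
          intro a ha
          simp only [Finset.mem_filter, Finset.mem_univ, true_and] at ha ⊢
          -- value of the other endpoint
          have hy : fv (a * (s : A)) = (fv a + c.val) % N := by
            have h1 : u (a * (s : A)) = u a + c := by
              rw [hudef]
              simp only []
              rw [map_mul, toAdd_mul]
            rw [hfvdef]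
            simp only []
            rw [h1, ZMod.val_add]
          have hxlt : fv a < N := ZMod.val_lt (u a)
          have hdisj : (fv a ≤ v ∧ v ≤ fv (a * (s : A)))
              ∨ (fv (a * (s : A)) ≤ v ∧ v ≤ fv a) := by
            rcases ha with ⟨h1, h2⟩ | ⟨h1, h2⟩
            · exact Or.inl ⟨hvD a h1, hvDc _ h2⟩
            · exact Or.inr ⟨hvD _ h1, hvDc a h2⟩
          have hwv : (u a).val = fv a := rfl
          rw [hUPdef]
          simp only []
          rw [hwv]
          rcases Nat.lt_or_ge (fv a + c.val) N with hnw | hnw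
          · have hyy : fv (a * (s : A)) = fv a + c.val := by
              rw [hy, Nat.mod_eq_of_lt hnw]
            rw [hyy] at hdisj
            split_ifs with hdir
            · have : ec = c.val := by omega
              omega
            · have : ec = N - c.val := by omega
              omega
          · have hyy : fv (a * (s : A)) = fv a + c.val - N := by
              rw [hy, Nat.mod_eq_sub_mod hnw, Nat.mod_eq_of_lt (by omega)]
            rw [hyy] at hdisj
            split_ifs with hdir
            · have : ec = c.val := by omega
              omega
            · have : ec = N - c.val := by omega
              omega
        refine le_trans hstep2 ?_
        -- step 3 : count elements with χ-value in the small set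
        set S : Finset A := Finset.univ.filter (fun a : A => UP (u a)) with hSdef
        have hfiber : ∀ w ∈ S.image u, (S.filter (fun a => u a = w)).card ≤ g := by
          intro w hw
          rcases (S.filter (fun a => u a = w)).eq_empty_or_nonempty with he | ⟨a0, ha0⟩
          · rw [he]; simp [hg0.le]
          · have ha0' : u a0 = w := by
              simp only [hSdef, Finset.mem_filter] at ha0
              exact ha0.2
            have hg_eq : (Finset.univ.filter (fun a : A => a ∈ K)).card = g := by
              rw [hgdef]
              calc (Finset.univ.filter (fun a : A => a ∈ K)).card
                  = Fintype.card {a : A // a ∈ K} := (Fintype.card_subtype _).symm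
                _ = Nat.card ↥K := Nat.card_eq_fintype_card.symm
            rw [← hg_eq]
            apply Finset.card_le_card_of_injOn (fun a => a * a0⁻¹)
            · intro a ha
              simp only [hSdef, Finset.mem_coe, Finset.mem_filter, Finset.mem_univ, true_and] at ha ⊢
              have hua : u a = w := ha.2
              have hχeq : χ a = χ a0 := by
                apply Multiplicative.toAdd.injective
                exact hua.trans ha0'.symm
              rw [hKdef]
              rw [MonoidHom.mem_ker, map_mul, map_inv, hχeq, mul_inv_cancel]
            · intro a _ a' _ h
              exact mul_right_cancel h
        have himg : S.image u ⊆
            (Finset.univ.filter (fun w : ZMod N => g ∣ w.val ∧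
              (if c.val ≤ N - c.val then v - ec else v) ≤ w.val ∧
              w.val ≤ (if c.val ≤ N - c.val then v - ec else v) + ec))
            ∪ (Finset.univ.filter (fun w : ZMod N => g ∣ w.val ∧
              (if c.val ≤ N - c.val then N - ec else 0) ≤ w.val ∧
              w.val ≤ (if c.val ≤ N - c.val then N - ec else 0) + ec)) := by
          intro w hw
          rw [Finset.mem_image] at hw
          obtain ⟨a, ha, rfl⟩ := hw
          simp only [hSdef, Finset.mem_filter, Finset.mem_univ, true_and] at ha
          have hdv : g ∣ (u a).val := hdvd a
          have hwlt : (u a).val < N := ZMod.val_lt (u a)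
          rw [Finset.mem_union, Finset.mem_filter, Finset.mem_filter]
          simp only [hUPdef] at ha
          split_ifs at ha ⊢ with hdir
          · rcases ha with ⟨h1, h2⟩ | h1
            · left
              exact ⟨Finset.mem_univ _, hdv, by omega, by omega⟩
            · right
              exact ⟨Finset.mem_univ _, hdv, by omega, by omega⟩
          · rcases ha with ⟨h1, h2⟩ | h1
            · left
              exact ⟨Finset.mem_univ _, hdv, by omega, by omega⟩
            · right
              exact ⟨Finset.mem_univ _, hdv, by omega, by omega⟩
        have hcount : (S.image u).card ≤ (ec / g + 1) + (ec / g + 1) := by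
          calc (S.image u).card ≤ _ := Finset.card_le_card himg
            _ ≤ _ := Finset.card_union_le _ _
            _ ≤ (ec / g + 1) + (ec / g + 1) := by
              apply Nat.add_le_add
              · exact countM g _ ec hg0
              · exact countM g _ ec hg0
        have hmain := Finset.card_le_mul_card_image (f := u) S g hfiber
        have hq := Nat.div_mul_le_self ec g
        calc S.card ≤ g * (S.image u).card := hmain
          _ ≤ g * ((ec / g + 1) + (ec / g + 1)) := Nat.mul_le_mul_left g hcount
          _ = 2 * (ec / g * g) + 2 * g := by ring
          _ ≤ 2 * ec + 2 * g := by omega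
      · -- the cut beyond all vertices : boundary is empty
        have hDuniv : D = Set.univ := by
          ext a
          simp only [Set.mem_univ, iff_true, hDdef]
          exact ⟨EQ.symm a, by
            have := (EQ.symm a).isLt
            simp only [Set.mem_setOf_eq]
            omega, EQ.apply_symm_apply a⟩
        have hie : IsEmpty {p : A × {s // s ∈ Sg} //
            Xor' ((p.1 : A) ∈ D) (p.1 * (p.2 : A) ∈ D)} := by
          constructor
          rintro ⟨p, hp⟩
          rw [hDuniv] at hp
          simp [Xor'] at hp
        have h0 : (cayleyGraph A Sg).bdry D = 0 := @Nat.card_of_isEmpty _ hie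
        rw [h0]
        exact Nat.zero_le _
    -- final arithmetic
    have hWb : W * b ≤ 4 * d * N := by
      calc W * b = ∑ s ∈ Sg, (2 * es s + 2 * g) * b := by rw [hWdef, Finset.sum_mul]
        _ ≤ ∑ _s ∈ Sg, 4 * N := by
          apply Finset.sum_le_sum
          intro s hs
          have h1 : es s * b < N := hbox s hs
          have h2 : (2 * es s + 2 * g) * b = 2 * (es s * b) + 2 * (g * b) := by ring
          omega
        _ = d * (4 * N) := by rw [Finset.sum_const, smul_eq_mul, hddef]
        _ = 4 * d * N := by ring
    have h1 : ((cayleyGraph A Sg).width : ℝ) ≤ (W : ℝ) := Nat.cast_le.mpr hwle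
    refine le_trans h1 ?_
    rw [le_div_iff₀ hb0R]
    calc (W : ℝ) * (b : ℝ) = ((W * b : ℕ) : ℝ) := by push_cast; ring
      _ ≤ ((4 * d * N : ℕ) : ℝ) := Nat.cast_le.mpr hWb
      _ ≤ 6 * (d : ℝ) * (N : ℝ) := by
        push_cast
        nlinarith [hdR, (by exact_mod_cast hN0.le : (0:ℝ) ≤ (N:ℝ))]
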